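/- Let H0 and H1 be complex Hilbert spaces and let A0 on H0 and A1 on H1 be bounded self-adjoint operators whose spectra are disjoint, with d := dist(spectrum(A0), spectrum(A1)) > 0. Let B : H1 → H0 be a bounded operator with ‖B‖ < d/2, and let L be the block operator matrix on H = H0 ⊕ H1 given by L(x0,x1) = (A0 x0 + B x1, −B* x0 + A1 x1). Then the spectrum of L is real: spectrum(L) ⊆ ℝ, i.e. every spectral point of L has zero imaginary part. (Theorem 5.10 of the paper; note that no assumption on the mutual position of spectrum(A0) and spectrum(A1) beyond disjointness at distance d is made, and the bound d/2 on ‖B‖ is sharp.) -/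

import Mathlib

open ContinuousLinearMap

set_option maxHeartbeats 1000000 in
private lemma real_arith (y β d ε a b δ0 δ1 : ℝ) (hy : 0 < y) (hβ : 0 ≤ β) (hd2 : 2*β < d)
    (hab : a^2 + b^2 = 1) (ha : 0 ≤ a) (hb : 0 ≤ b) (hδ0 : 0 ≤ δ0) (hδ1 : 0 ≤ δ1) (hε : 0 ≤ ε)
    (h1 : y * |a^2 - b^2| ≤ 2*ε)
    (h2 : δ0 * a ≤ ε + β * b) (h3 : δ1 * b ≤ ε + β * a) (h4 : d ≤ δ0 + δ1)
    (hc1 : 8*ε ≤ y) (hc2 : 16*ε*(y+2*β) < 3*y*(d-2*β)) : False := by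
  have hsum : 1 ≤ a + b := by nlinarith [mul_nonneg ha hb, sq_nonneg (a+b)]
  have habs : y * |a - b| ≤ 2*ε := by
    have h5 : |a^2 - b^2| = |a - b| * (a + b) := by
      rw [show a^2 - b^2 = (a-b)*(a+b) by ring, abs_mul,
        abs_of_nonneg (show (0:ℝ) ≤ a+b by linarith)]
    rw [h5] at h1
    nlinarith [mul_nonneg (mul_nonneg hy.le (abs_nonneg (a-b)))
      (show (0:ℝ) ≤ a+b-1 by linarith)]
  have hab4 : |a - b| * 4 ≤ 1 := by nlinarith [abs_nonneg (a-b)]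
  have ha38 : 3 ≤ 8*a := by
    have := neg_abs_le (a-b); have := le_abs_self (a-b); linarith
  have hb38 : 3 ≤ 8*b := by
    have := neg_abs_le (a-b); have := le_abs_self (a-b); linarith
  have hyb : y * b ≤ y * a + 2*ε := by
    have h6 : b - a ≤ |a - b| := by rw [abs_sub_comm]; exact le_abs_self _
    nlinarith [mul_le_mul_of_nonneg_left h6 hy.le]
  have hya : y * a ≤ y * b + 2*ε := by
    nlinarith [mul_le_mul_of_nonneg_left (le_abs_self (a-b)) hy.le]
  have hstep0 : (y*δ0 - y*β)*a ≤ ε*(y+2*β) := by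
    nlinarith [mul_le_mul_of_nonneg_left h2 hy.le]
  have hstep1 : (y*δ1 - y*β)*b ≤ ε*(y+2*β) := by
    nlinarith [mul_le_mul_of_nonneg_left h3 hy.le]
  have key0 : 3*(y*δ0) ≤ 3*(y*β) + 8*(ε*(y+2*β)) := by
    rcases le_or_gt (y*δ0) (y*β) with h | h
    · linarith [mul_nonneg hε (show (0:ℝ) ≤ y+2*β by linarith)]
    · linarith [hstep0, mul_le_mul_of_nonneg_left ha38 (show (0:ℝ) ≤ y*δ0 - y*β by linarith)]
  have key1 : 3*(y*δ1) ≤ 3*(y*β) + 8*(ε*(y+2*β)) := by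
    rcases le_or_gt (y*δ1) (y*β) with h | h
    · linarith [mul_nonneg hε (show (0:ℝ) ≤ y+2*β by linarith)]
    · linarith [hstep1, mul_le_mul_of_nonneg_left hb38 (show (0:ℝ) ≤ y*δ1 - y*β by linarith)]
  linarith [key0, key1, hc2, mul_le_mul_of_nonneg_left h4 (show (0:ℝ) ≤ 3*y by linarith)]

open ContinuousLinearMap

private lemma aux_selfAdjoint_lower {E : Type*} [NormedAddCommGroup E] [InnerProductSpace ℂ E]
    [CompleteSpace E] (A : E →L[ℂ] E) (hA : IsSelfAdjoint A) (z : ℂ)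
    (hz : z.im ≠ 0) (u : E) :
    Metric.infDist z (spectrum ℂ A) * ‖u‖ ≤ ‖z • u - A u‖ := by
  rcases Set.eq_empty_or_nonempty (spectrum ℂ A) with hS | hS
  · rw [hS, Metric.infDist_empty, zero_mul]
    exact norm_nonneg _
  · have hnotmem : z ∉ spectrum ℂ A := fun h => hz (hA.im_eq_zero_of_mem_spectrum h)
    have hδpos : 0 < Metric.infDist z (spectrum ℂ A) :=
      ((spectrum.isClosed (𝕜 := ℂ) A).notMem_iff_infDist_pos hS).mp hnotmem
    set δ := Metric.infDist z (spectrum ℂ A) with hδdef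
    haveI : IsStarNormal A := hA.isStarNormal
    have hzw : ∀ w ∈ spectrum ℂ A, z - w ≠ 0 := by
      intro w hw h
      exact hnotmem (by rwa [sub_eq_zero] at h ▸ hw)
    have hcont : ContinuousOn (fun w : ℂ => (z - w)⁻¹) (spectrum ℂ A) :=
      ContinuousOn.inv₀ ((continuous_const.sub continuous_id).continuousOn) hzw
    have hcg : ContinuousOn (fun w : ℂ => z - w) (spectrum ℂ A) :=
      (continuous_const.sub continuous_id).continuousOn
    have hkey : cfc (fun w : ℂ => (z - w)⁻¹) A * (algebraMap ℂ (E →L[ℂ] E) z - A) = 1 := by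
      have h1 : cfc (fun w : ℂ => z - w) A = algebraMap ℂ (E →L[ℂ] E) z - A := by
        rw [cfc_sub (fun _ : ℂ => z) (fun w : ℂ => w) A continuousOn_const
          continuous_id.continuousOn, cfc_const z A, cfc_id' ℂ A]
      have hmul : cfc (fun w : ℂ => (z - w)⁻¹ * (z - w)) A =
          cfc (fun w : ℂ => (z - w)⁻¹) A * cfc (fun w : ℂ => z - w) A :=
        cfc_mul _ _ A hcont hcg
      have hone : cfc (fun w : ℂ => (z - w)⁻¹ * (z - w)) A = 1 := by
        rw [cfc_congr (g := fun _ : ℂ => 1) (fun w hw => inv_mul_cancel₀ (hzw w hw))]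
        exact cfc_const_one ℂ A
      rw [← h1, ← hmul, hone]
    have hnorm : ‖cfc (fun w : ℂ => (z - w)⁻¹) A‖ ≤ δ⁻¹ := by
      apply norm_cfc_le (by positivity)
      intro w hw
      rw [norm_inv]
      apply inv_anti₀ hδpos
      rw [← dist_eq_norm]
      exact Metric.infDist_le_dist_of_mem hw
    have h2 : ‖u‖ ≤ δ⁻¹ * ‖z • u - A u‖ := by
      have happ := congrArg (fun T : E →L[ℂ] E => T u) hkey
      change cfc (fun w : ℂ => (z - w)⁻¹) A ((algebraMap ℂ (E →L[ℂ] E) z - A) u) = u at happ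
      have hsub : (algebraMap ℂ (E →L[ℂ] E) z - A) u = z • u - A u := by
        simp [Algebra.algebraMap_eq_smul_one]
      calc ‖u‖ = ‖cfc (fun w : ℂ => (z - w)⁻¹) A ((algebraMap ℂ (E →L[ℂ] E) z - A) u)‖ := by
            rw [happ]
        _ ≤ ‖cfc (fun w : ℂ => (z - w)⁻¹) A‖ * ‖(algebraMap ℂ (E →L[ℂ] E) z - A) u‖ :=
            le_opNorm _ _
        _ ≤ δ⁻¹ * ‖z • u - A u‖ := by
            rw [hsub]; exact mul_le_mul_of_nonneg_right hnorm (norm_nonneg _)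
    calc δ * ‖u‖ ≤ δ * (δ⁻¹ * ‖z • u - A u‖) := mul_le_mul_of_nonneg_left h2 hδpos.le
      _ = ‖z • u - A u‖ := by field_simp

open ContinuousLinearMap

private lemma aux_isUnit {E : Type*} [NormedAddCommGroup E] [InnerProductSpace ℂ E]
    [CompleteSpace E] (T : E →L[ℂ] E) (c c' : ℝ) (hc : 0 < c) (hc' : 0 < c')
    (h1 : ∀ u, c * ‖u‖ ≤ ‖T u‖) (h2 : ∀ u, c' * ‖u‖ ≤ ‖adjoint T u‖) :
    IsUnit T := by
  have anti : AntilipschitzWith (⟨c, hc.le⟩ : NNReal)⁻¹ T := by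
    apply T.antilipschitz_of_bound
    intro x
    show ‖x‖ ≤ c⁻¹ * ‖T x‖
    rw [inv_mul_eq_div, le_div_iff₀ hc]
    linarith [h1 x]
  have hdense : (LinearMap.range (T : E →ₗ[ℂ] E)).topologicalClosure = ⊤ := by
    rw [Submodule.topologicalClosure_eq_top_iff, Submodule.eq_bot_iff]
    intro x hx
    have hTx : adjoint T x = 0 := by
      apply ext_inner_left ℂ
      intro v
      rw [inner_zero_right, adjoint_inner_right]
      exact (Submodule.mem_orthogonal _ _).mp hx _ (LinearMap.mem_range_self (T : E →ₗ[ℂ] E) v)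
    have h3 := h2 x
    rw [hTx, norm_zero] at h3
    exact norm_le_zero_iff.mp (by nlinarith [norm_nonneg x])
  have hbij : Function.Bijective T :=
    (T.bijective_iff_dense_range_and_antilipschitz).mpr ⟨hdense, _, anti⟩
  let e := ContinuousLinearEquiv.ofBijective T
    (LinearMap.ker_eq_bot.mpr hbij.1) (LinearMap.range_eq_top.mpr hbij.2)
  have hcoe : (e : E →L[ℂ] E) = T := ContinuousLinearEquiv.coe_ofBijective _ _ _
  refine ⟨⟨T, (e.symm : E →L[ℂ] E), ?_, ?_⟩, rfl⟩
  · ext x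
    simp only [ContinuousLinearMap.mul_apply, ContinuousLinearMap.one_apply]
    conv_lhs => rw [← hcoe]
    exact e.apply_symm_apply x
  · ext x
    simp only [ContinuousLinearMap.mul_apply, ContinuousLinearMap.one_apply]
    conv_lhs => rw [← hcoe]
    exact e.symm_apply_apply x
set_option maxHeartbeats 3200000 in
private lemma block_lower_bound {H0 : Type*} [NormedAddCommGroup H0] [InnerProductSpace ℂ H0]
    [CompleteSpace H0] {H1 : Type*} [NormedAddCommGroup H1] [InnerProductSpace ℂ H1]
    [CompleteSpace H1]
    (A0 : H0 →L[ℂ] H0) (A1 : H1 →L[ℂ] H1)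
    (hA0 : IsSelfAdjoint A0) (hA1 : IsSelfAdjoint A1)
    (d : ℝ) (B : H1 →L[ℂ] H0) (hB : ‖B‖ < d / 2) (z : ℂ) (hz : z.im ≠ 0)
    (hdist : d ≤ Metric.infDist z (spectrum ℂ A0) + Metric.infDist z (spectrum ℂ A1))
    (M : WithLp 2 (H0 × H1) →L[ℂ] WithLp 2 (H0 × H1))
    (hM : ∀ (x0 : H0) (x1 : H1),
      M ((WithLp.equiv 2 (H0 × H1)).symm (x0, x1)) =
        (WithLp.equiv 2 (H0 × H1)).symm (A0 x0 + B x1, -(adjoint B) x0 + A1 x1)) :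
    ∃ c > 0, ∀ u, c * ‖u‖ ≤ ‖z • u - M u‖ := by
  set y : ℝ := |z.im| with hydef
  set β : ℝ := ‖B‖ with hβdef
  have hy : 0 < y := abs_pos.mpr hz
  have hβ : 0 ≤ β := norm_nonneg B
  have hd2 : 2*β < d := by rw [hβdef]; linarith
  set c : ℝ := min (y/8) (3*y*(d-2*β) / (16*(y+2*β))) with hcdef
  have hc : 0 < c := by
    apply lt_min (by positivity)
    have h1 : 0 < 3*y*(d-2*β) := by nlinarith
    have h2 : 0 < 16*(y+2*β) := by nlinarith
    positivity
  refine ⟨c, hc, ?_⟩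
  have hunit : ∀ u : WithLp 2 (H0 × H1), ‖u‖ = 1 → c ≤ ‖z • u - M u‖ := by
    intro u hu1
    by_contra hcon
    push_neg at hcon
    set ε : ℝ := ‖z • u - M u‖ with hεdef
    have hε : 0 ≤ ε := norm_nonneg _
    set x0 : H0 := u.fst with hx0
    set x1 : H1 := u.snd with hx1
    set r0 : H0 := z • x0 - (A0 x0 + B x1) with hr0
    set r1 : H1 := z • x1 - (-(adjoint B) x0 + A1 x1) with hr1
    have hurfl : u = (WithLp.equiv 2 (H0 × H1)).symm (x0, x1) := rfl
    have hMu : M u = (WithLp.equiv 2 (H0 × H1)).symm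
        (A0 x0 + B x1, -(adjoint B) x0 + A1 x1) := by
      conv_lhs => rw [hurfl, hM]
    have hrfst : (z • u - M u).fst = r0 := by rw [hMu]; rfl
    have hrsnd : (z • u - M u).snd = r1 := by rw [hMu]; rfl
    have hnormsq : ε^2 = ‖r0‖^2 + ‖r1‖^2 := by
      rw [hεdef, WithLp.prod_norm_sq_eq_of_L2, hrfst, hrsnd]
    have hr0ε : ‖r0‖ ≤ ε := by nlinarith [norm_nonneg r0, norm_nonneg r1, sq_nonneg ‖r1‖]
    have hr1ε : ‖r1‖ ≤ ε := by nlinarith [norm_nonneg r0, norm_nonneg r1, sq_nonneg ‖r0‖]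
    set a : ℝ := ‖x0‖ with ha_def
    set b : ℝ := ‖x1‖ with hb_def
    have hab : a^2 + b^2 = 1 := by
      have := WithLp.prod_norm_sq_eq_of_L2 u
      rw [hu1] at this; simpa using this.symm
    have ha : 0 ≤ a := norm_nonneg _
    have hb : 0 ≤ b := norm_nonneg _
    have ha1 : a ≤ 1 := by nlinarith
    have hb1 : b ≤ 1 := by nlinarith
    -- imaginary part computation
    have him0 : (inner ℂ x0 r0 : ℂ).im = z.im * a^2 - (inner ℂ x0 (B x1) : ℂ).im := by
      have hre : (inner ℂ x0 (A0 x0) : ℂ).im = 0 := by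
        have : (starRingEnd ℂ) (inner ℂ x0 (A0 x0) : ℂ) = (inner ℂ x0 (A0 x0) : ℂ) := by
          rw [inner_conj_symm, ← adjoint_inner_left, hA0.adjoint_eq]
        rw [Complex.conj_eq_iff_im] at this; exact this
      have hself : (inner ℂ x0 x0 : ℂ) = ((‖x0‖^2 : ℝ) : ℂ) := by
        rw [inner_self_eq_norm_sq_to_K]; norm_cast
      rw [hr0]
      simp only [inner_sub_right, inner_add_right, inner_smul_right, hself]
      simp [Complex.mul_im, hre, ha_def, ← Complex.ofReal_pow]
      try ring
    have him1 : (inner ℂ x1 r1 : ℂ).im = z.im * b^2 - (inner ℂ x0 (B x1) : ℂ).im := by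
      have hre : (inner ℂ x1 (A1 x1) : ℂ).im = 0 := by
        have : (starRingEnd ℂ) (inner ℂ x1 (A1 x1) : ℂ) = (inner ℂ x1 (A1 x1) : ℂ) := by
          rw [inner_conj_symm, ← adjoint_inner_left, hA1.adjoint_eq]
        rw [Complex.conj_eq_iff_im] at this; exact this
      have hBstar : (inner ℂ x1 ((adjoint B) x0) : ℂ) =
          (starRingEnd ℂ) (inner ℂ x0 (B x1) : ℂ) := by
        rw [adjoint_inner_right, inner_conj_symm]
      have hself : (inner ℂ x1 x1 : ℂ) = ((‖x1‖^2 : ℝ) : ℂ) := by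
        rw [inner_self_eq_norm_sq_to_K]; norm_cast
      rw [hr1]
      simp only [inner_sub_right, inner_add_right, inner_neg_right, inner_smul_right,
        hself, hBstar]
      simp [Complex.mul_im, hre, hb_def, ← Complex.ofReal_pow]
      rw [← inner_conj_symm (B x1) x0, Complex.conj_im]
      ring
    have hF1 : y * |a^2 - b^2| ≤ 2*ε := by
      have hdiff : z.im * (a^2 - b^2) = (inner ℂ x0 r0 : ℂ).im - (inner ℂ x1 r1 : ℂ).im := by
        rw [him0, him1]; ring
      have habs0 : |(inner ℂ x0 r0 : ℂ).im| ≤ a * ε := by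
        calc |(inner ℂ x0 r0 : ℂ).im| ≤ ‖(inner ℂ x0 r0 : ℂ)‖ := by
              exact Complex.abs_im_le_norm _
          _ ≤ a * ‖r0‖ := by rw [ha_def]; exact norm_inner_le_norm x0 r0
          _ ≤ a * ε := by exact mul_le_mul_of_nonneg_left hr0ε ha
      have habs1 : |(inner ℂ x1 r1 : ℂ).im| ≤ b * ε := by
        calc |(inner ℂ x1 r1 : ℂ).im| ≤ ‖(inner ℂ x1 r1 : ℂ)‖ := by
              exact Complex.abs_im_le_norm _
          _ ≤ b * ‖r1‖ := by rw [hb_def]; exact norm_inner_le_norm x1 r1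
          _ ≤ b * ε := by exact mul_le_mul_of_nonneg_left hr1ε hb
      have : |z.im * (a^2 - b^2)| ≤ a * ε + b * ε := by
        rw [hdiff]
        calc |(inner ℂ x0 r0 : ℂ).im - (inner ℂ x1 r1 : ℂ).im|
            ≤ |(inner ℂ x0 r0 : ℂ).im| + |(inner ℂ x1 r1 : ℂ).im| := abs_sub _ _
          _ ≤ a * ε + b * ε := add_le_add habs0 habs1
      rw [abs_mul] at this
      rw [hydef]
      nlinarith
    -- distance estimates
    have hδ0 : Metric.infDist z (spectrum ℂ A0) * a ≤ ε + β * b := by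
      have h1 := aux_selfAdjoint_lower A0 hA0 z hz x0
      have h2 : z • x0 - A0 x0 = r0 + B x1 := by rw [hr0]; abel
      have h3 : ‖z • x0 - A0 x0‖ ≤ ε + β * b := by
        rw [h2]
        calc ‖r0 + B x1‖ ≤ ‖r0‖ + ‖B x1‖ := norm_add_le _ _
          _ ≤ ε + β * b := add_le_add hr0ε (B.le_opNorm x1)
      exact le_trans h1 h3
    have hδ1 : Metric.infDist z (spectrum ℂ A1) * b ≤ ε + β * a := by
      have h1 := aux_selfAdjoint_lower A1 hA1 z hz x1
      have h2 : z • x1 - A1 x1 = r1 - (adjoint B) x0 := by rw [hr1]; abel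
      have h3 : ‖z • x1 - A1 x1‖ ≤ ε + β * a := by
        rw [h2]
        calc ‖r1 - (adjoint B) x0‖ ≤ ‖r1‖ + ‖(adjoint B) x0‖ := norm_sub_le _ _
          _ ≤ ε + β * a := by
              refine add_le_add hr1ε ?_
              calc ‖(adjoint B) x0‖ ≤ ‖adjoint B‖ * a := (adjoint B).le_opNorm x0
                _ = β * a := by rw [adjoint.norm_map B]
      exact le_trans h1 h3
    have hc1 : 8*ε ≤ y := by
      have : ε < y/8 := lt_of_lt_of_le hcon (min_le_left _ _)
      linarith
    have hc2 : 16*ε*(y+2*β) < 3*y*(d-2*β) := by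
      have h1 : ε < 3*y*(d-2*β) / (16*(y+2*β)) := lt_of_lt_of_le hcon (min_le_right _ _)
      have h2 : 0 < 16*(y+2*β) := by nlinarith
      rw [lt_div_iff₀ h2] at h1
      nlinarith
    exact real_arith y β d ε a b (Metric.infDist z (spectrum ℂ A0))
      (Metric.infDist z (spectrum ℂ A1)) hy hβ hd2 hab ha hb
      Metric.infDist_nonneg Metric.infDist_nonneg hε hF1 hδ0 hδ1 hdist hc1 hc2
  intro u
  rcases eq_or_ne u 0 with rfl | hu0
  · simp
  · have hnu : 0 < ‖u‖ := norm_pos_iff.mpr hu0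
    have hts : ‖(((‖u‖ : ℝ) : ℂ))⁻¹‖ = ‖u‖⁻¹ := by
      rw [norm_inv, Complex.norm_real, Real.norm_of_nonneg hnu.le]
    have hv := hunit ((((‖u‖ : ℝ) : ℂ))⁻¹ • u) (by
      rw [norm_smul, hts, inv_mul_cancel₀ hnu.ne'])
    have hscale : z • ((((‖u‖:ℝ):ℂ))⁻¹ • u) - M ((((‖u‖:ℝ):ℂ))⁻¹ • u)
        = (((‖u‖:ℝ):ℂ))⁻¹ • (z • u - M u) := by
      rw [map_smul, smul_sub, smul_comm]
    rw [hscale, norm_smul, hts] at hv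
    calc c * ‖u‖ ≤ (‖u‖⁻¹ * ‖z • u - M u‖) * ‖u‖ := mul_le_mul_of_nonneg_right hv hnu.le
      _ = ‖z • u - M u‖ := by field_simp

private lemma adjoint_block {H0 : Type*} [NormedAddCommGroup H0] [InnerProductSpace ℂ H0] [CompleteSpace H0]
    {H1 : Type*} [NormedAddCommGroup H1] [InnerProductSpace ℂ H1] [CompleteSpace H1]
    (A0 : H0 →L[ℂ] H0) (A1 : H1 →L[ℂ] H1)
    (hA0 : IsSelfAdjoint A0) (hA1 : IsSelfAdjoint A1)
    (B : H1 →L[ℂ] H0)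
    (L : WithLp 2 (H0 × H1) →L[ℂ] WithLp 2 (H0 × H1))
    (hL : ∀ (x0 : H0) (x1 : H1),
      L ((WithLp.equiv 2 (H0 × H1)).symm (x0, x1)) =
        (WithLp.equiv 2 (H0 × H1)).symm (A0 x0 + B x1, -(adjoint B) x0 + A1 x1)) :
    ∀ (x0 : H0) (x1 : H1),
      (adjoint L) ((WithLp.equiv 2 (H0 × H1)).symm (x0, x1)) =
        (WithLp.equiv 2 (H0 × H1)).symm
          (A0 x0 + (-B) x1, -(adjoint (-B)) x0 + A1 x1) := by
  intro y0 y1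
  apply ext_inner_left ℂ
  intro u
  rw [adjoint_inner_right]
  have hu : u = (WithLp.equiv 2 (H0 × H1)).symm (u.fst, u.snd) := rfl
  conv_lhs => rw [hu, hL]
  simp only [WithLp.prod_inner_apply, WithLp.equiv_symm_apply, WithLp.toLp_fst, WithLp.toLp_snd,
    ContinuousLinearMap.neg_apply, map_neg, neg_neg]
  have e0 : (inner ℂ (A0 u.fst) y0 : ℂ) = inner ℂ u.fst (A0 y0) := by
    rw [← adjoint_inner_left, hA0.adjoint_eq]
  have e1 : (inner ℂ (A1 u.snd) y1 : ℂ) = inner ℂ u.snd (A1 y1) := by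
    rw [← adjoint_inner_left, hA1.adjoint_eq]
  have e2 : (inner ℂ (B u.snd) y0 : ℂ) = inner ℂ u.snd ((adjoint B) y0) := by
    rw [adjoint_inner_right]
  have e3 : (inner ℂ ((adjoint B) u.fst) y1 : ℂ) = inner ℂ u.fst (B y1) := by
    rw [adjoint_inner_left]
  simp only [inner_add_left, inner_add_right, inner_neg_left, inner_neg_right,
    e0, e1, e2, e3]
  show _ = inner ℂ u.fst (A0 y0) + -inner ℂ u.fst (B y1) + (inner ℂ u.snd ((adjoint B) y0) +
    inner ℂ u.snd (A1 y1))
  ring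

/-- Theorem 5.10 of the paper (bounded-operator setting): let `A0`, `A1` be bounded
self-adjoint operators with disjoint spectra separated by the distance `d > 0` (no further
assumption on the mutual position of the spectra), let `B : H1 → H0` be a bounded operator
with `‖B‖ < d/2`, and let `L` be the block operator matrix
`L(x0,x1) = (A0 x0 + B x1, -B* x0 + A1 x1)` on the Hilbert direct sum `H = H0 ⊕ H1`.
Then the spectrum of `L` is real: every spectral point of `L` has zero imaginary part. -/
theorem J_selfAdjoint_block_spectrum_real
    {H0 : Type*} [NormedAddCommGroup H0] [InnerProductSpace ℂ H0] [CompleteSpace H0]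
    {H1 : Type*} [NormedAddCommGroup H1] [InnerProductSpace ℂ H1] [CompleteSpace H1]
    (A0 : H0 →L[ℂ] H0) (A1 : H1 →L[ℂ] H1)
    (hA0 : IsSelfAdjoint A0) (hA1 : IsSelfAdjoint A1)
    (hdisj : spectrum ℂ A0 ∩ spectrum ℂ A1 = ∅)
    (d : ℝ)
    (hd : d = sInf {t : ℝ | ∃ μ ∈ spectrum ℂ A0, ∃ ν ∈ spectrum ℂ A1, t = dist μ ν})
    (hd0 : 0 < d)
    (B : H1 →L[ℂ] H0) (hB : ‖B‖ < d / 2)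
    (L : WithLp 2 (H0 × H1) →L[ℂ] WithLp 2 (H0 × H1))
    (hL : ∀ (x0 : H0) (x1 : H1),
      L ((WithLp.equiv 2 (H0 × H1)).symm (x0, x1)) =
        (WithLp.equiv 2 (H0 × H1)).symm (A0 x0 + B x1, -(adjoint B) x0 + A1 x1)) :
    ∀ z ∈ spectrum ℂ L, z.im = 0 := by
  intro z hzmem
  by_contra hzim
  have hS0 : (spectrum ℂ A0).Nonempty := by
    by_contra h
    rw [Set.not_nonempty_iff_eq_empty] at h
    have he : {t : ℝ | ∃ μ ∈ spectrum ℂ A0, ∃ ν ∈ spectrum ℂ A1, t = dist μ ν} = ∅ := by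
      ext t; simp [h]
    rw [hd, he, Real.sInf_empty] at hd0
    exact lt_irrefl 0 hd0
  have hS1 : (spectrum ℂ A1).Nonempty := by
    by_contra h
    rw [Set.not_nonempty_iff_eq_empty] at h
    have he : {t : ℝ | ∃ μ ∈ spectrum ℂ A0, ∃ ν ∈ spectrum ℂ A1, t = dist μ ν} = ∅ := by
      ext t; simp [h]
    rw [hd, he, Real.sInf_empty] at hd0
    exact lt_irrefl 0 hd0
  have hkey : ∀ w : ℂ,
      d ≤ Metric.infDist w (spectrum ℂ A0) + Metric.infDist w (spectrum ℂ A1) := by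
    intro w
    obtain ⟨μ, hμ, hμd⟩ := (spectrum.isCompact A0).exists_infDist_eq_dist hS0 w
    obtain ⟨ν, hν, hνd⟩ := (spectrum.isCompact A1).exists_infDist_eq_dist hS1 w
    have hbdd : BddBelow {t : ℝ | ∃ μ ∈ spectrum ℂ A0, ∃ ν ∈ spectrum ℂ A1, t = dist μ ν} := by
      refine ⟨0, fun t ht => ?_⟩
      obtain ⟨μ', _, ν', _, rfl⟩ := ht
      exact dist_nonneg
    have h1 : d ≤ dist μ ν := by
      rw [hd]
      exact csInf_le hbdd ⟨μ, hμ, ν, hν, rfl⟩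
    rw [hμd, hνd]
    exact h1.trans (dist_triangle_left μ ν w)
  obtain ⟨c1, hc1, hb1⟩ := block_lower_bound A0 A1 hA0 hA1 d B hB z hzim (hkey z) L hL
  have hzc : (starRingEnd ℂ z).im ≠ 0 := by simpa using hzim
  have hL' := adjoint_block A0 A1 hA0 hA1 B L hL
  obtain ⟨c2, hc2, hb2⟩ := block_lower_bound A0 A1 hA0 hA1 d (-B)
    (by rwa [norm_neg]) (starRingEnd ℂ z) hzc (hkey _) (adjoint L) hL'
  set T : WithLp 2 (H0 × H1) →L[ℂ] WithLp 2 (H0 × H1) := z • 1 - L with hT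
  have hTadj : adjoint T = (starRingEnd ℂ z) • (1 : WithLp 2 (H0 × H1) →L[ℂ] WithLp 2 (H0 × H1))
      - adjoint L := by
    rw [← star_eq_adjoint, hT, star_sub, star_smul, star_one, star_eq_adjoint]
    congr 1
  have hU : IsUnit T := by
    apply aux_isUnit T c1 c2 hc1 hc2
    · intro u
      have h := hb1 u
      simpa [hT, ContinuousLinearMap.sub_apply, ContinuousLinearMap.smul_apply,
        ContinuousLinearMap.one_apply] using h
    · intro u
      have h := hb2 u
      rw [hTadj]
      simpa [ContinuousLinearMap.sub_apply, ContinuousLinearMap.smul_apply,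
        ContinuousLinearMap.one_apply] using h
  exact (spectrum.mem_iff.mp hzmem) (by rwa [Algebra.algebraMap_eq_smul_one])
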